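/- arXiv:1212.6317 — 6 statements merged into one kernel-verified Lean document; each statement's English description precedes it below -/
import Mathlib

section
/- For a ∈ ℂ let p_a = X⁵/5 − (1+a)X⁴/4 + aX³/3 (an antiderivative of X²(X−1)(X−a)). Then p_a has exactly two distinct critical values if and only if a ∈ {0, 1, 3/5, 5/3, (−2 + i√5)/3, (−2 − i√5)/3}; for all other values of a, p_a has exactly three distinct critical values. -/
open Polynomial

/-- The set of critical values of a polynomial `p`: values of `p` at the roots of `p'`. -/
noncomputable def criticalValues (p : ℂ[X]) : Set ℂ :=
  (fun x => p.eval x) '' {x : ℂ | p.derivative.eval x = 0}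

/-- The antiderivative of `X²(X-1)(X-a)` vanishing at `0`. -/
noncomputable def pA (a : ℂ) : ℂ[X] :=
  C (1 / 5) * X ^ 5 - C ((1 + a) / 4) * X ^ 4 + C (a / 3) * X ^ 3

section Aux

private lemma ncard3' {u w : ℂ} (h1 : u ≠ 0) (h2 : w ≠ 0) (h3 : u ≠ w) :
    ({0,u,w}:Set ℂ).ncard = 3 := by
  rw [Set.ncard_insert_of_notMem (by simp [Ne.symm h1, Ne.symm h2]), Set.ncard_pair h3]

private lemma ncard2A {u w : ℂ} (h1 : u = 0) (h2 : w ≠ 0) : ({0,u,w}:Set ℂ).ncard = 2 := by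
  subst h1; rw [Set.insert_idem, Set.ncard_pair (Ne.symm h2)]

private lemma ncard2B {u w : ℂ} (h1 : u ≠ 0) (h2 : w = 0) : ({0,u,w}:Set ℂ).ncard = 2 := by
  subst h2; rw [Set.pair_comm u 0, Set.insert_idem, Set.ncard_pair h1.symm]

private lemma ncard2C {u w : ℂ} (h1 : u ≠ 0) (h3 : u = w) : ({0,u,w}:Set ℂ).ncard = 2 := by
  rw [← h3, Set.pair_eq_singleton, Set.ncard_pair h1.symm]

private lemma critVals (a : ℂ) :
    criticalValues (pA a) = {0, (5*a-3)/60, a^4*(5-3*a)/60} := by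
  have hroots : {x : ℂ | (pA a).derivative.eval x = 0} = {0, 1, a} := by
    ext x
    have h : (pA a).derivative.eval x = x^2*(x-1)*(x-a) := by simp [pA]; ring
    simp [h, mul_eq_zero, pow_eq_zero_iff, sub_eq_zero]; tauto
  rw [criticalValues, hroots]
  rw [Set.image_insert_eq, Set.image_insert_eq, Set.image_singleton]
  have h0 : (pA a).eval 0 = 0 := by simp [pA]
  have h1 : (pA a).eval 1 = (5*a-3)/60 := by simp [pA]; ring
  have ha : (pA a).eval a = a^4*(5-3*a)/60 := by simp [pA]; ring
  rw [h0, h1, ha]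

private lemma hu_iff (a : ℂ) : (5*a-3)/60 = 0 ↔ a = 3/5 := by
  rw [_root_.div_eq_zero_iff]
  constructor
  · rintro (h | h)
    · linear_combination h/5
    · norm_num at h
  · intro h; left; linear_combination 5*h

private lemma hw_iff (a : ℂ) : a^4*(5-3*a)/60 = 0 ↔ a = 0 ∨ a = 5/3 := by
  rw [_root_.div_eq_zero_iff, mul_eq_zero, pow_eq_zero_iff (by norm_num)]
  constructor
  · rintro ((h | h) | h)
    · exact Or.inl h
    · right; linear_combination -h/3
    · norm_num at h
  · rintro (h | h)
    · exact Or.inl (Or.inl h)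
    · left; right; linear_combination -3*h

private lemma huw_iff (a : ℂ) : (5*a-3)/60 = a^4*(5-3*a)/60 ↔
    (a = 1 ∨ a = (-2 + Complex.I * Real.sqrt 5) / 3 ∨
      a = (-2 - Complex.I * Real.sqrt 5) / 3) := by
  have ht : (Complex.I * (Real.sqrt 5 : ℝ))^2 = -5 := by
    rw [mul_pow, Complex.I_sq, ← Complex.ofReal_pow, Real.sq_sqrt (by norm_num : (5:ℝ) ≥ 0)]
    norm_num
  have heq : (5*a-3) - a^4*(5-3*a) = 3 * ((a-1)^3 *
      ((a - (-2 + Complex.I * Real.sqrt 5) / 3) * (a - (-2 - Complex.I * Real.sqrt 5) / 3))) := by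
    linear_combination ((a-1)^3/3) * ht
  rw [← sub_eq_zero, div_sub_div_same, _root_.div_eq_zero_iff, heq]
  constructor
  · rintro (h | h)
    · rcases mul_eq_zero.mp h with h | h
      · norm_num at h
      · rcases mul_eq_zero.mp h with h | h
        · left; exact sub_eq_zero.mp (pow_eq_zero_iff (by norm_num) |>.mp h)
        · rcases mul_eq_zero.mp h with h | h
          · exact Or.inr (Or.inl (sub_eq_zero.mp h))
          · exact Or.inr (Or.inr (sub_eq_zero.mp h))
    · norm_num at h
  · rintro (rfl | rfl | rfl) <;> left <;> ring

private lemma rp_ne : (-2 + Complex.I * Real.sqrt 5) / 3 ≠ (3/5 : ℂ) := by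
  intro h
  have h2 : Complex.I * (Real.sqrt 5 : ℝ) = 9/5 + 2 := by linear_combination 3*h
  have h3 := congrArg Complex.im h2
  simp [Complex.mul_im] at h3

private lemma rm_ne : (-2 - Complex.I * Real.sqrt 5) / 3 ≠ (3/5 : ℂ) := by
  intro h
  have h2 : Complex.I * (Real.sqrt 5 : ℝ) = -(9/5) - 2 := by linear_combination -3*h
  have h3 := congrArg Complex.im h2
  simp [Complex.mul_im] at h3

end Aux

/-- `p_a = ∫ x²(x-1)(x-a) dx` is a Chebyshev polynomial (exactly two distinct critical
values) iff `a ∈ {0, 1, 3/5, 5/3, (-2 ± i√5)/3}`; otherwise it is a Zolotarev polynomial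
(exactly three distinct critical values). -/
theorem pA_chebyshev_iff (a : ℂ) :
    ((criticalValues (pA a)).ncard = 2 ↔
      a ∈ ({0, 1, 3 / 5, 5 / 3, (-2 + Complex.I * Real.sqrt 5) / 3,
        (-2 - Complex.I * Real.sqrt 5) / 3} : Set ℂ)) ∧
    (a ∉ ({0, 1, 3 / 5, 5 / 3, (-2 + Complex.I * Real.sqrt 5) / 3,
        (-2 - Complex.I * Real.sqrt 5) / 3} : Set ℂ) →
      (criticalValues (pA a)).ncard = 3) := by
  have hS := critVals a
  have part2 : a ∉ ({0, 1, 3 / 5, 5 / 3, (-2 + Complex.I * Real.sqrt 5) / 3,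
      (-2 - Complex.I * Real.sqrt 5) / 3} : Set ℂ) → (criticalValues (pA a)).ncard = 3 := by
    intro hn
    simp only [Set.mem_insert_iff, Set.mem_singleton_iff, not_or] at hn
    obtain ⟨h0, h1, h35, h53, hp, hm⟩ := hn
    rw [hS]
    exact ncard3' (fun h => h35 ((hu_iff a).mp h))
      (fun h => ((hw_iff a).mp h).elim h0 h53)
      (fun h => ((huw_iff a).mp h).elim h1 (fun h' => h'.elim hp hm))
  refine ⟨⟨fun h => ?_, fun h => ?_⟩, part2⟩
  · by_contra hn
    rw [part2 hn] at h
    norm_num at h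
  · simp only [Set.mem_insert_iff, Set.mem_singleton_iff] at h
    rcases h with rfl | rfl | rfl | rfl | rfl | rfl <;> rw [hS]
    · exact ncard2B (fun h => by have := (hu_iff 0).mp h; norm_num at this)
        ((hw_iff 0).mpr (Or.inl rfl))
    · exact ncard2C (fun h => by have := (hu_iff 1).mp h; norm_num at this)
        ((huw_iff 1).mpr (Or.inl rfl))
    · exact ncard2A ((hu_iff _).mpr rfl)
        (fun h => by rcases (hw_iff _).mp h with h | h <;> norm_num at h)
    · exact ncard2B (fun h => by have := (hu_iff _).mp h; norm_num at this)
        ((hw_iff _).mpr (Or.inr rfl))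
    · exact ncard2C (fun h => rp_ne ((hu_iff _).mp h))
        ((huw_iff _).mpr (Or.inr (Or.inl rfl)))
    · exact ncard2C (fun h => rm_ne ((hu_iff _).mp h))
        ((huw_iff _).mpr (Or.inr (Or.inr rfl)))
end

section
/- For λ ∈ [0,1] let p_λ = X⁵/5 − (1 + 3λ/5)X⁴/4 + (3λ/5)X³/3 (an antiderivative of X²(X−1)(X−3λ/5)). Then: (i) p_0 has exactly two distinct critical values, namely 0 and −1/20, and the multiset of root multiplicities of p_0 − 0 is {4,1} while that of p_0 + 1/20 is {2,1,1,1}; (ii) p_1 has exactly two distinct critical values, namely 0 and (3/5)⁴·(16/5)/60, and the multiset of root multiplicities of p_1 − 0 is {3,2} while that of p_1 over its other critical value is {2,1,1,1}; (iii) for every λ ∈ (0,1), p_λ has exactly three distinct critical values. (This family is a Z-homotopy between the 5-edge trees T_1 and T_2.) -/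
open Polynomial

/-- The multiset of multiplicities of the roots of `p - α` (one entry per distinct root). -/
noncomputable def fiberMults (p : ℂ[X]) (α : ℂ) : Multiset ℕ :=
  (p - C α).roots.toFinset.val.map fun x => (p - C α).rootMultiplicity x

/-! ### Auxiliary definitions and lemmas -/

/-- The polynomial family of the homotopy. -/
noncomputable def Q (t : ℝ) : ℂ[X] :=
  C (1 / 5) * X ^ 5 - C ((1 + 3 * (t : ℂ) / 5) / 4) * X ^ 4 + C ((3 * (t : ℂ) / 5) / 3) * X ^ 3

lemma Q_eval (t : ℝ) (x : ℂ) :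
    (Q t).eval x = x ^ 5 / 5 - (1 + 3 * t / 5) / 4 * x ^ 4 + t / 5 * x ^ 3 := by
  simp [Q]; ring

lemma Q_deriv_eval (t : ℝ) (x : ℂ) :
    (Q t).derivative.eval x = x ^ 2 * (x - 1) * (x - 3 * t / 5) := by
  simp [Q]; ring

lemma Q_crit_set (t : ℝ) :
    {x : ℂ | (Q t).derivative.eval x = 0} = {0, 1, 3 * (t : ℂ) / 5} := by
  ext x
  simp [Q_deriv_eval, mul_eq_zero, sub_eq_zero, pow_eq_zero_iff]
  tauto

lemma Q_critVals (t : ℝ) :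
    criticalValues (Q t) =
      {(Q t).eval 0, (Q t).eval 1, (Q t).eval (3 * (t : ℂ) / 5)} := by
  rw [criticalValues, Q_crit_set]
  simp [Set.image_insert_eq]

lemma Q_shift_natDegree (t : ℝ) (α : ℂ) : (Q t - C α).natDegree = 5 := by
  unfold Q
  compute_degree!

lemma Q_shift_ne_zero (t : ℝ) (α : ℂ) : Q t - C α ≠ 0 := by
  intro h
  have := Q_shift_natDegree t α
  rw [h] at this
  simp at this

/-- Counting multiplicities for a multiset of roots of shape `{a^k, b^l}`. -/
lemma map_count_pair (a b : ℂ) (k l : ℕ) (h : a ≠ b) (hk : k ≠ 0) (hl : l ≠ 0) :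
    (Multiset.replicate k a + Multiset.replicate l b).toFinset.val.map
      (fun x => (Multiset.replicate k a + Multiset.replicate l b).count x) = {k, l} := by
  classical
  have hfin : (Multiset.replicate k a + Multiset.replicate l b).toFinset = {a, b} := by
    ext x
    simp [Multiset.mem_replicate, hk, hl]
  rw [hfin]
  have hval : ({a, b} : Finset ℂ).val = a ::ₘ {b} := by
    rw [Finset.insert_val_of_notMem (by simp [h])]
    rfl
  rw [hval]
  simp [Multiset.count_replicate, h, h.symm]

lemma fiber_explicit (q : ℂ[X]) (a b : ℂ) (k l : ℕ) (h : a ≠ b) (hk : k ≠ 0) (hl : l ≠ 0)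
    (hroots : q.roots = Multiset.replicate k a + Multiset.replicate l b) :
    q.roots.toFinset.val.map (fun x => q.rootMultiplicity x) = {k, l} := by
  calc q.roots.toFinset.val.map (fun x => q.rootMultiplicity x)
      = q.roots.toFinset.val.map (fun x => q.roots.count x) :=
        Multiset.map_congr rfl (fun x _ => (count_roots q).symm)
    _ = {k, l} := by rw [hroots]; exact map_count_pair a b k l h hk hl

lemma deriv_eval_zero_of_two_le {q : ℂ[X]} {x : ℂ} (hq : q ≠ 0)
    (h : 2 ≤ q.rootMultiplicity x) : q.derivative.eval x = 0 := by
  obtain ⟨c, hc⟩ := (le_rootMultiplicity_iff hq).mp h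
  subst hc
  simp [derivative_mul, derivative_pow]

/-- A degree-5 polynomial over `ℂ` with one double root and all other roots simple
has fiber multiplicity multiset `{2, 1, 1, 1}`. -/
lemma mults_two_one (q : ℂ[X]) (a : ℂ) (hdeg : q.natDegree = 5)
    (ha : q.rootMultiplicity a = 2)
    (hrest : ∀ x : ℂ, q.eval x = 0 → x ≠ a → q.rootMultiplicity x = 1) :
    q.roots.toFinset.val.map (fun x => q.rootMultiplicity x) = {2, 1, 1, 1} := by
  classical
  have hq : q ≠ 0 := fun h => by simp [h] at hdeg
  have hcard : q.roots.card = 5 := by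
    rw [← hdeg]
    exact (Polynomial.splits_iff_card_roots.mp (IsAlgClosed.splits q))
  have hamem : a ∈ q.roots.toFinset := by
    rw [Multiset.mem_toFinset, mem_roots hq]
    exact (rootMultiplicity_pos hq).mp (by omega)
  have hsum : ∑ x ∈ q.roots.toFinset, q.rootMultiplicity x = 5 := by
    rw [← hcard, ← Multiset.toFinset_sum_count_eq]
    exact Finset.sum_congr rfl fun x _ => (count_roots q).symm ▸ rfl
  have hone : ∀ x ∈ q.roots.toFinset.erase a, q.rootMultiplicity x = 1 := by
    intro x hx
    have hxa : x ≠ a := Finset.ne_of_mem_erase hx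
    have hxr : x ∈ q.roots := Multiset.mem_toFinset.mp (Finset.mem_of_mem_erase hx)
    exact hrest x ((mem_roots hq).mp hxr) hxa
  have hsum' : ∑ x ∈ q.roots.toFinset.erase a, q.rootMultiplicity x = 3 := by
    rw [← Finset.add_sum_erase _ _ hamem] at hsum
    omega
  have hcard' : (q.roots.toFinset.erase a).card = 3 := by
    rw [Finset.sum_congr rfl hone] at hsum'
    simpa using hsum'
  have hval : q.roots.toFinset.val = a ::ₘ (q.roots.toFinset.erase a).val := by
    rw [← Finset.insert_val_of_notMem (Finset.notMem_erase a _), Finset.insert_erase hamem]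
  rw [hval, Multiset.map_cons, ha]
  have hrep : (q.roots.toFinset.erase a).val.map (fun x => q.rootMultiplicity x) =
      Multiset.replicate 3 1 := by
    rw [Multiset.eq_replicate]
    constructor
    · rw [Multiset.card_map]; exact hcard'
    · intro n hn
      obtain ⟨x, hx, rfl⟩ := Multiset.mem_map.mp hn
      exact hone x hx
  rw [hrep]
  rfl

/-! ### Factorizations -/

lemma Q0_fac : Q 0 = C (1/5 : ℂ) * (X ^ 4 * (X - C (5/4 : ℂ))) := by
  apply Polynomial.funext
  intro x
  simp [Q]
  ring

lemma Q1_fac : Q 1 = C (1/5 : ℂ) * (X ^ 3 * (X - C (1 : ℂ)) ^ 2) := by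
  apply Polynomial.funext
  intro x
  simp [Q]
  ring

lemma Q0_shift_fac :
    Q 0 - C (-1/20 : ℂ) =
      (X - C (1:ℂ)) ^ 2 *
        (C (1/5 : ℂ) * X ^ 3 + C (3/20 : ℂ) * X ^ 2 + C (1/10 : ℂ) * X + C (1/20 : ℂ)) := by
  apply Polynomial.funext
  intro x
  simp [Q]
  ring

lemma Q1_shift_fac :
    Q 1 - C ((3/5 : ℂ) ^ 4 * (16/5) / 60) =
      (X - C (3/5 : ℂ)) ^ 2 *
        (C (1/5 : ℂ) * X ^ 3 - C (4/25 : ℂ) * X ^ 2 - C (8/125 : ℂ) * X - C (12/625 : ℂ)) := by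
  apply Polynomial.funext
  intro x
  simp [Q]
  ring

lemma Q0_roots : (Q 0).roots = Multiset.replicate 4 0 + Multiset.replicate 1 (5/4 : ℂ) := by
  rw [Q0_fac, roots_C_mul _ (by norm_num : (1/5 : ℂ) ≠ 0),
    roots_mul (mul_ne_zero (pow_ne_zero _ X_ne_zero) (X_sub_C_ne_zero _)),
    roots_pow, roots_X, roots_X_sub_C, Multiset.nsmul_singleton]
  rfl

lemma Q1_roots : (Q 1).roots = Multiset.replicate 3 0 + Multiset.replicate 2 (1 : ℂ) := by
  rw [Q1_fac, roots_C_mul _ (by norm_num : (1/5 : ℂ) ≠ 0),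
    roots_mul (mul_ne_zero (pow_ne_zero _ X_ne_zero) (pow_ne_zero _ (X_sub_C_ne_zero _))),
    roots_pow, roots_pow, roots_X, roots_X_sub_C, Multiset.nsmul_singleton,
    Multiset.nsmul_singleton]

/-- Multiplicity-2 at the double critical point of `Q 0 + 1/20`. -/
lemma Q0_shift_mult_one : (Q 0 - C (-1/20 : ℂ)).rootMultiplicity 1 = 2 := by
  rw [Q0_shift_fac, rootMultiplicity_mul (Q0_shift_fac ▸ Q_shift_ne_zero 0 (-1/20)),
    rootMultiplicity_X_sub_C_pow]
  rw [rootMultiplicity_eq_zero (by simp [IsRoot]; norm_num)]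

lemma Q1_shift_mult_one :
    (Q 1 - C ((3/5 : ℂ) ^ 4 * (16/5) / 60)).rootMultiplicity (3/5) = 2 := by
  rw [Q1_shift_fac, rootMultiplicity_mul (Q1_shift_fac ▸ Q_shift_ne_zero 1 _),
    rootMultiplicity_X_sub_C_pow]
  rw [rootMultiplicity_eq_zero (by simp [IsRoot]; norm_num)]

/-! ### The main theorem -/

/-- The family `p_λ = ∫ x²(x-1)(x-3λ/5) dx` is a Z-homotopy between
the 5-edge trees `T₁` and `T₂`. -/
theorem Zhomotopy_T1_T2 :
    let p : ℝ → ℂ[X] := fun t =>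
      C (1 / 5) * X ^ 5 - C ((1 + 3 * (t : ℂ) / 5) / 4) * X ^ 4 + C ((3 * (t : ℂ) / 5) / 3) * X ^ 3
    ((0 : ℂ) ≠ -1 / 20 ∧ criticalValues (p 0) = {0, -1 / 20} ∧
      fiberMults (p 0) 0 = {4, 1} ∧ fiberMults (p 0) (-1 / 20) = {2, 1, 1, 1}) ∧
    ((0 : ℂ) ≠ (3 / 5) ^ 4 * (16 / 5) / 60 ∧
      criticalValues (p 1) = {0, (3 / 5) ^ 4 * (16 / 5) / 60} ∧
      fiberMults (p 1) 0 = {3, 2} ∧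
      fiberMults (p 1) ((3 / 5) ^ 4 * (16 / 5) / 60) = {2, 1, 1, 1}) ∧
    (∀ t ∈ Set.Ioo (0 : ℝ) 1, (criticalValues (p t)).ncard = 3) := by
  intro p
  have hp : ∀ t : ℝ, p t = Q t := fun t => rfl
  refine ⟨⟨by norm_num, ?_, ?_, ?_⟩, ⟨by norm_num, ?_, ?_, ?_⟩, ?_⟩
  · -- critical values of p 0
    rw [hp 0, Q_critVals 0]
    have h0 : (Q 0).eval 0 = 0 := by rw [Q_eval]; norm_num
    have h1 : (Q 0).eval 1 = -1/20 := by rw [Q_eval]; norm_num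
    have h2 : (3 * ((0:ℝ) : ℂ) / 5) = 0 := by norm_num
    rw [h2, h0, h1]
    ext x
    simp
    tauto
  · -- fiberMults (p 0) 0 = {4, 1}
    rw [hp 0, fiberMults, map_zero, sub_zero]
    exact fiber_explicit _ 0 (5/4) 4 1 (by norm_num) (by norm_num) (by norm_num) Q0_roots
  · -- fiberMults (p 0) (-1/20) = {2,1,1,1}
    rw [hp 0, fiberMults]
    have hne : Q 0 - C (-1/20 : ℂ) ≠ 0 := Q_shift_ne_zero 0 _
    refine mults_two_one _ 1 (Q_shift_natDegree 0 _) ?_ ?_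
    · exact Q0_shift_mult_one
    · intro x hx hxne
      refine le_antisymm ?_ ((rootMultiplicity_pos hne).mpr hx)
      by_contra hgt
      push_neg at hgt
      have hd := deriv_eval_zero_of_two_le (x := x) hne (by omega)
      rw [derivative_sub, derivative_C, sub_zero, Q_deriv_eval] at hd
      have h0 : x = 0 ∨ x = 1 := by
        rcases mul_eq_zero.mp hd with h | h
        · rcases mul_eq_zero.mp h with h | h
          · left; exact pow_eq_zero_iff (by norm_num) |>.mp h
          · right; exact sub_eq_zero.mp h
        · left
          have : x - 3 * ((0:ℝ):ℂ) / 5 = x := by norm_num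
          rw [this] at h
          exact h
      rcases h0 with rfl | rfl
      · rw [eval_sub, eval_C, Q_eval] at hx
        norm_num at hx
      · exact hxne rfl
  · -- critical values of p 1
    rw [hp 1, Q_critVals 1]
    have h0 : (Q 1).eval 0 = 0 := by rw [Q_eval]; norm_num
    have h1 : (Q 1).eval 1 = 0 := by rw [Q_eval]; norm_num
    have h2 : (Q 1).eval (3 * ((1:ℝ):ℂ) / 5) = (3/5 : ℂ) ^ 4 * (16/5) / 60 := by
      rw [Q_eval]; norm_num
    rw [h0, h1, h2]
    ext x
    simp
  · -- fiberMults (p 1) 0 = {3, 2}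
    rw [hp 1, fiberMults, map_zero, sub_zero]
    exact fiber_explicit _ 0 1 3 2 (by norm_num) (by norm_num) (by norm_num) Q1_roots
  · -- fiberMults (p 1) α = {2,1,1,1}
    rw [hp 1, fiberMults]
    have hne : Q 1 - C ((3/5 : ℂ) ^ 4 * (16/5) / 60) ≠ 0 := Q_shift_ne_zero 1 _
    refine mults_two_one _ (3/5) (Q_shift_natDegree 1 _) ?_ ?_
    · exact Q1_shift_mult_one
    · intro x hx hxne
      refine le_antisymm ?_ ((rootMultiplicity_pos hne).mpr hx)
      by_contra hgt
      push_neg at hgt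
      have hd := deriv_eval_zero_of_two_le (x := x) hne (by omega)
      rw [derivative_sub, derivative_C, sub_zero, Q_deriv_eval] at hd
      have h0 : x = 0 ∨ x = 1 ∨ x = 3/5 := by
        rcases mul_eq_zero.mp hd with h | h
        · rcases mul_eq_zero.mp h with h | h
          · left; exact pow_eq_zero_iff (by norm_num) |>.mp h
          · right; left; exact sub_eq_zero.mp h
        · right; right
          have := sub_eq_zero.mp h
          rw [this]; norm_num
      rcases h0 with rfl | rfl | rfl
      · rw [eval_sub, eval_C, Q_eval] at hx
        norm_num at hx
      · rw [eval_sub, eval_C, Q_eval] at hx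
        norm_num at hx
      · exact hxne rfl
  · -- three critical values for t ∈ (0,1)
    intro t ht
    obtain ⟨ht0, ht1⟩ := ht
    rw [hp t, Q_critVals t]
    have h0 : (Q t).eval 0 = 0 := by rw [Q_eval]; norm_num
    have h1 : (Q t).eval 1 = (((t - 1) / 20 : ℝ) : ℂ) := by
      rw [Q_eval]; push_cast; ring
    have h2 : (Q t).eval (3 * (t:ℂ) / 5) =
        ((((3*t/5) ^ 4 * (5 - 3 * (3*t/5)) / 60 : ℝ)) : ℂ) := by
      rw [Q_eval]; push_cast; ring
    rw [h0, h1, h2]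
    set r1 : ℝ := (t - 1) / 20 with hr1
    set r2 : ℝ := (3*t/5) ^ 4 * (5 - 3 * (3*t/5)) / 60 with hr2
    have hr1neg : r1 < 0 := by rw [hr1]; linarith
    have hr2pos : 0 < r2 := by
      rw [hr2]
      have hs : 0 < 3*t/5 := by linarith
      have h4 : 0 < (3*t/5) ^ 4 := by positivity
      nlinarith
    rw [Set.ncard_eq_three]
    refine ⟨0, (r1 : ℂ), (r2 : ℂ), ?_, ?_, ?_, rfl⟩
    · intro h
      rw [← Complex.ofReal_zero] at h
      exact absurd (Complex.ofReal_inj.mp h).symm (by linarith)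
    · intro h
      rw [← Complex.ofReal_zero] at h
      exact absurd (Complex.ofReal_inj.mp h).symm (by linarith)
    · intro h
      exact absurd (Complex.ofReal_inj.mp h) (by linarith)
end

section
/- For λ ∈ [0,1] let a(λ) = 1 + 2λ/3 and p_λ = X⁵/5 − (1 + a(λ))X⁴/4 + a(λ)X³/3 (an antiderivative of X²(X−1)(X−a(λ))). Then: (i) p_0 (where a = 1) has exactly two distinct critical values, namely 0 and 1/30, and the multisets of root multiplicities of p_0 − 0 and of p_0 − 1/30 are both {3,1,1}; (ii) p_1 (where a = 5/3) has exactly two distinct critical values, namely 0 and p_1(1) = (5·(5/3) − 3)/60, the multiset of root multiplicities of p_1 − 0 is {3,2} and that over the other critical value is {2,1,1,1}; (iii) for every λ ∈ (0,1), p_λ has exactly three distinct critical values. (This family is a Z-homotopy between the 5-edge trees T_3 and T_2.) -/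
open Polynomial

/- ### Auxiliary material -/

lemma fiberMults_eq' (p : ℂ[X]) (α : ℂ) :
    fiberMults p α
      = (p - C α).roots.toFinset.val.map (fun x => (p - C α).roots.count x) := by
  unfold fiberMults
  exact Multiset.map_congr rfl (fun x _ => (count_roots _).symm)

lemma Zh.mults311 {x y z : ℂ} (hxy : x ≠ y) (hxz : x ≠ z) (hyz : y ≠ z) :
    (({x, x, x, y, z} : Multiset ℂ).toFinset.val.map
      (fun w => ({x, x, x, y, z} : Multiset ℂ).count w)) = {3, 1, 1} := by
  have hf : ({x, x, x, y, z} : Multiset ℂ).toFinset = {x, y, z} := by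
    ext w; simp [Multiset.mem_toFinset]
  have hv : ({x, y, z} : Finset ℂ).val = ({x, y, z} : Multiset ℂ) := by
    rw [Finset.insert_val_of_notMem (by simp [hxy, hxz]),
        Finset.insert_val_of_notMem (by simp [hyz])]
    rfl
  rw [hf, hv]
  simp [Multiset.count_cons, Multiset.count_singleton, hxy, hxz, hyz,
    hxy.symm, hxz.symm, hyz.symm]

lemma Zh.mults32 {x y : ℂ} (hxy : x ≠ y) :
    (({x, x, x, y, y} : Multiset ℂ).toFinset.val.map
      (fun w => ({x, x, x, y, y} : Multiset ℂ).count w)) = {3, 2} := by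
  have hf : ({x, x, x, y, y} : Multiset ℂ).toFinset = {x, y} := by
    ext w; simp [Multiset.mem_toFinset]
  have hv : ({x, y} : Finset ℂ).val = ({x, y} : Multiset ℂ) := by
    rw [Finset.insert_val_of_notMem (by simp [hxy])]; rfl
  rw [hf, hv]
  simp [Multiset.count_cons, Multiset.count_singleton, hxy, hxy.symm]

lemma Zh.mults2111 {x : ℂ} {t : Multiset ℂ} (ht : t.Nodup) (hcard : Multiset.card t = 3)
    (hx : x ∉ t) :
    ((x ::ₘ x ::ₘ t).toFinset.val.map (fun w => (x ::ₘ x ::ₘ t).count w)) = {2, 1, 1, 1} := by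
  have hf : (x ::ₘ x ::ₘ t).toFinset = insert x t.toFinset := by
    simp [Multiset.toFinset_cons]
  have hxf : x ∉ t.toFinset := by simpa using hx
  rw [hf, Finset.insert_val_of_notMem hxf, Multiset.toFinset_val,
    Multiset.dedup_eq_self.mpr ht]
  rw [Multiset.map_cons]
  have h2 : (x ::ₘ x ::ₘ t).count x = 2 := by
    simp [Multiset.count_cons_self, Multiset.count_eq_zero_of_notMem hx]
  have h1 : t.map (fun w => (x ::ₘ x ::ₘ t).count w) = Multiset.replicate 3 1 := by
    rw [Multiset.map_congr rfl (fun w hw => ?_), Multiset.map_const', hcard]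
    have hwx : w ≠ x := fun h => hx (h ▸ hw)
    simp [Multiset.count_cons_of_ne hwx, Multiset.count_eq_one_of_mem ht hw]
  rw [h2, h1]
  rfl

/-- `√15` as a complex number. -/
noncomputable def Zh.u : ℂ := (Real.sqrt 15 : ℝ)

lemma Zh.hu : Zh.u ^ 2 = 15 := by
  rw [Zh.u, ← Complex.ofReal_pow, Real.sq_sqrt (by norm_num : (15:ℝ) ≥ 0)]; norm_num

lemma Zh.hu0 : Zh.u ≠ 0 := by
  intro h0; have := Zh.hu; rw [h0] at this; norm_num at this

noncomputable def Zh.r1 : ℂ := (15 + Complex.I * Zh.u) / 12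
noncomputable def Zh.r2 : ℂ := (15 - Complex.I * Zh.u) / 12

lemma Zh.hr_sum : Zh.r1 + Zh.r2 = 5/2 := by rw [Zh.r1, Zh.r2]; ring
lemma Zh.hr_prod : Zh.r1 * Zh.r2 = 5/3 := by
  rw [Zh.r1, Zh.r2]
  linear_combination (-(Zh.u^2)/144) * Complex.I_sq + (1/144 : ℂ) * Zh.hu

lemma Zh.hr_ne : Zh.r1 ≠ Zh.r2 := by
  rw [Zh.r1, Zh.r2]
  intro h
  have h2 : Complex.I * Zh.u = 0 := by linear_combination 6 * h
  rcases mul_eq_zero.mp h2 with h | h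
  · exact Complex.I_ne_zero h
  · exact Zh.hu0 h

lemma Zh.hr1_ne0 : Zh.r1 ≠ 0 := by
  intro h
  have h2 : Zh.r1 * Zh.r2 = 0 := by rw [h]; ring
  rw [Zh.hr_prod] at h2; norm_num at h2

lemma Zh.hr2_ne0 : Zh.r2 ≠ 0 := by
  intro h
  have h2 : Zh.r1 * Zh.r2 = 0 := by rw [h]; ring
  rw [Zh.hr_prod] at h2; norm_num at h2

noncomputable def Zh.s1 : ℂ := (-3 + Complex.I * Zh.u) / 12
noncomputable def Zh.s2 : ℂ := (-3 - Complex.I * Zh.u) / 12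

lemma Zh.hs_sum : Zh.s1 + Zh.s2 = -(1/2) := by rw [Zh.s1, Zh.s2]; ring
lemma Zh.hs_prod : Zh.s1 * Zh.s2 = 1/6 := by
  rw [Zh.s1, Zh.s2]
  linear_combination (-(Zh.u^2)/144) * Complex.I_sq + (1/144 : ℂ) * Zh.hu

lemma Zh.hs_ne : Zh.s1 ≠ Zh.s2 := by
  rw [Zh.s1, Zh.s2]
  intro h
  have h2 : Complex.I * Zh.u = 0 := by linear_combination 6 * h
  rcases mul_eq_zero.mp h2 with h | h
  · exact Complex.I_ne_zero h
  · exact Zh.hu0 h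

lemma Zh.hs1_ne1 : (1:ℂ) ≠ Zh.s1 := by
  rw [Zh.s1]
  intro h
  have h2 : Complex.I * Zh.u = 15 := by linear_combination -12 * h
  have h3 : (Complex.I * Zh.u)^2 = 225 := by rw [h2]; norm_num
  rw [mul_pow, Complex.I_sq, Zh.hu] at h3
  norm_num at h3

lemma Zh.hs2_ne1 : (1:ℂ) ≠ Zh.s2 := by
  rw [Zh.s2]
  intro h
  have h2 : Complex.I * Zh.u = -15 := by linear_combination 12 * h
  have h3 : (Complex.I * Zh.u)^2 = 225 := by rw [h2]; norm_num
  rw [mul_pow, Complex.I_sq, Zh.hu] at h3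
  norm_num at h3

/-- The squarefree cubic appearing in the fiber of `p₁` over `4/45`. -/
noncomputable def Zh.g : ℂ[X] := C 9 * X^3 - C 12 * X^2 - C 8 * X - C 4

lemma Zh.hg1 : Zh.g.eval 1 = -15 := by simp [Zh.g]; norm_num

lemma Zh.hgne : Zh.g ≠ 0 := by
  intro h
  have := Zh.hg1
  rw [h] at this
  simp at this

lemma Zh.hdg : derivative Zh.g = C 27 * X^2 - C 24 * X - C 8 := by
  simp [Zh.g, derivative_sub, derivative_C_mul]
  apply Polynomial.funext; intro x; simp; ring

lemma Zh.hgsep : Zh.g.Separable := by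
  rw [Polynomial.separable_def']
  refine ⟨C (-53/180) + C (1/5) * X, C (1/45) + C (23/180) * X - C (1/15) * X^2, ?_⟩
  rw [Zh.hdg, Zh.g]
  apply Polynomial.funext; intro x; simp; ring

lemma Zh.hgdeg : Zh.g.natDegree = 3 := by
  unfold Zh.g; compute_degree!

lemma Zh.hgcard : Multiset.card Zh.g.roots = 3 := by
  rw [← Zh.hgdeg]
  exact Polynomial.splits_iff_card_roots.mp (IsAlgClosed.splits Zh.g)

lemma Zh.hgnodup : Zh.g.roots.Nodup := Polynomial.nodup_roots Zh.hgsep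

lemma Zh.hg_one_notmem : (1:ℂ) ∉ Zh.g.roots := by
  intro h
  have h2 := Polynomial.isRoot_of_mem_roots h
  rw [Polynomial.IsRoot, Zh.hg1] at h2
  norm_num at h2

/-- The family `p_λ = ∫ x²(x-1)(x-a(λ)) dx` with `a(λ) = 1 + 2λ/3` is a Z-homotopy
between the 5-edge trees `T₃` and `T₂`. -/
theorem Zhomotopy_T3_T2 :
    let a : ℝ → ℂ := fun t => 1 + 2 * (t : ℂ) / 3
    let p : ℝ → ℂ[X] := fun t =>
      C (1 / 5) * X ^ 5 - C ((1 + a t) / 4) * X ^ 4 + C (a t / 3) * X ^ 3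
    ((0 : ℂ) ≠ 1 / 30 ∧ criticalValues (p 0) = {0, 1 / 30} ∧
      fiberMults (p 0) 0 = {3, 1, 1} ∧ fiberMults (p 0) (1 / 30) = {3, 1, 1}) ∧
    ((p 1).eval 1 = (5 * (5 / 3) - 3) / 60 ∧ (0 : ℂ) ≠ (p 1).eval 1 ∧
      criticalValues (p 1) = {0, (p 1).eval 1} ∧
      fiberMults (p 1) 0 = {3, 2} ∧ fiberMults (p 1) ((p 1).eval 1) = {2, 1, 1, 1}) ∧
    (∀ t ∈ Set.Ioo (0 : ℝ) 1, (criticalValues (p t)).ncard = 3) := by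
  intro a p
  -- derivative of the family
  have hderiv : ∀ t : ℝ, derivative (p t)
      = X^2 * ((X : ℂ[X]) - 1) * (X - C (a t)) := by
    intro t
    have h1 : derivative (p t)
        = C (1:ℂ) * X^4 - C (1 + a t) * X^3 + C (a t) * X^2 := by
      simp only [p]
      simp [derivative_sub, derivative_add, derivative_C_mul]
      apply Polynomial.funext; intro x; simp; ring
    rw [h1]
    apply Polynomial.funext; intro x; simp; ring
  -- critical values of the family
  have hcv : ∀ t : ℝ, criticalValues (p t)
      = {(p t).eval 0, (p t).eval 1, (p t).eval (a t)} := by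
    intro t
    unfold criticalValues
    rw [hderiv t]
    have hz : {x : ℂ | (X^2 * ((X : ℂ[X]) - 1) * (X - C (a t))).eval x = 0}
        = {0, 1, a t} := by
      ext x
      simp [mul_eq_zero, pow_eq_zero_iff, sub_eq_zero]
      tauto
    rw [hz, Set.image_insert_eq, Set.image_insert_eq, Set.image_singleton]
  have ha0 : a 0 = 1 := by simp [a]
  have ha1 : a 1 = 5/3 := by simp [a]; norm_num
  have he0 : ∀ t : ℝ, (p t).eval 0 = 0 := by intro t; simp [p]
  refine ⟨⟨by norm_num, ?_, ?_, ?_⟩, ?_, ?_⟩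
  · -- critical values of p 0
    rw [hcv 0, ha0, he0 0]
    have h1 : (p 0).eval 1 = 1/30 := by simp [p, a]; norm_num
    rw [h1]
    ext w; simp
  · -- fiberMults (p 0) 0
    have hfac : p 0 = C (1/5 : ℂ) * (X^3 * ((X - C Zh.r1) * (X - C Zh.r2))) := by
      apply Polynomial.funext; intro x
      simp only [p, a]
      simp
      linear_combination (x^4/5) * Zh.hr_sum - (x^3/5) * Zh.hr_prod
    rw [fiberMults_eq']
    have hroots : (p 0 - C 0).roots = {0, 0, 0, Zh.r1, Zh.r2} := by
      rw [map_zero, sub_zero, hfac,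
        roots_C_mul _ (by norm_num : (1/5 : ℂ) ≠ 0),
        roots_mul (mul_ne_zero (pow_ne_zero _ X_ne_zero)
          (mul_ne_zero (X_sub_C_ne_zero Zh.r1) (X_sub_C_ne_zero Zh.r2))),
        roots_pow, roots_X,
        roots_mul (mul_ne_zero (X_sub_C_ne_zero Zh.r1) (X_sub_C_ne_zero Zh.r2)),
        roots_X_sub_C, roots_X_sub_C]
      rfl
    rw [hroots]
    exact Zh.mults311 Zh.hr1_ne0.symm.symm.symm Zh.hr2_ne0.symm Zh.hr_ne
  · -- fiberMults (p 0) (1/30)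
    have hfac : p 0 - C (1/30 : ℂ)
        = C (1/5 : ℂ) * ((X - C 1)^3 * ((X - C Zh.s1) * (X - C Zh.s2))) := by
      apply Polynomial.funext; intro x
      simp only [p, a]
      simp
      linear_combination ((x-1)^3 * x / 5) * Zh.hs_sum - ((x-1)^3/5) * Zh.hs_prod
    rw [fiberMults_eq', hfac,
      roots_C_mul _ (by norm_num : (1/5 : ℂ) ≠ 0),
      roots_mul (mul_ne_zero (pow_ne_zero _ (X_sub_C_ne_zero 1))
        (mul_ne_zero (X_sub_C_ne_zero Zh.s1) (X_sub_C_ne_zero Zh.s2))),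
      roots_pow, roots_X_sub_C,
      roots_mul (mul_ne_zero (X_sub_C_ne_zero Zh.s1) (X_sub_C_ne_zero Zh.s2)),
      roots_X_sub_C, roots_X_sub_C]
    have : (3 • ({1} : Multiset ℂ) + ({Zh.s1} + {Zh.s2}))
        = ({1, 1, 1, Zh.s1, Zh.s2} : Multiset ℂ) := rfl
    rw [this]
    exact Zh.mults311 Zh.hs1_ne1 Zh.hs2_ne1 Zh.hs_ne
  · -- part (ii)
    have hval : (p 1).eval 1 = 4/45 := by simp [p, a]; norm_num
    have heq : ((5 * (5 / 3) - 3) / 60 : ℂ) = 4/45 := by norm_num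
    refine ⟨by rw [hval, heq], by rw [hval]; norm_num, ?_, ?_, ?_⟩
    · -- critical values of p 1
      rw [hcv 1, ha1, he0 1]
      have hea : (p 1).eval (5/3) = 0 := by simp [p, a]; norm_num
      rw [hea]
      ext w; simp; tauto
    · -- fiberMults (p 1) 0
      have hfac : p 1 = C (1/5 : ℂ) * (X^3 * (X - C (5/3 : ℂ))^2) := by
        apply Polynomial.funext; intro x
        simp only [p, a]
        simp
        ring
      rw [fiberMults_eq']
      have hroots : (p 1 - C 0).roots = {0, 0, 0, 5/3, 5/3} := by
        rw [map_zero, sub_zero, hfac,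
          roots_C_mul _ (by norm_num : (1/5 : ℂ) ≠ 0),
          roots_mul (mul_ne_zero (pow_ne_zero _ X_ne_zero)
            (pow_ne_zero _ (X_sub_C_ne_zero (5/3 : ℂ)))),
          roots_pow, roots_X, roots_pow, roots_X_sub_C]
        rfl
      rw [hroots]
      exact Zh.mults32 (by norm_num)
    · -- fiberMults (p 1) over the second critical value
      rw [hval]
      have hfac : p 1 - C (4/45 : ℂ) = C (1/45 : ℂ) * ((X - C 1)^2 * Zh.g) := by
        apply Polynomial.funext; intro x
        simp only [p, a]
        simp [Zh.g]
        ring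
      rw [fiberMults_eq', hfac,
        roots_C_mul _ (by norm_num : (1/45 : ℂ) ≠ 0),
        roots_mul (mul_ne_zero (pow_ne_zero _ (X_sub_C_ne_zero 1)) Zh.hgne),
        roots_pow, roots_X_sub_C]
      have h2 : (2 • ({1} : Multiset ℂ) + Zh.g.roots)
          = (1 ::ₘ 1 ::ₘ Zh.g.roots) := by
        rw [show (2 • ({1} : Multiset ℂ)) = 1 ::ₘ 1 ::ₘ 0 from rfl,
          Multiset.cons_add, Multiset.cons_add, zero_add]
      rw [h2]
      exact Zh.mults2111 Zh.hgnodup Zh.hgcard Zh.hg_one_notmem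
  · -- part (iii)
    intro t ht
    obtain ⟨ht0, ht1⟩ := ht
    rw [hcv t, he0 t]
    have he1 : (p t).eval 1 = ((1/30 + t/18 : ℝ) : ℂ) := by
      simp [p, a]; ring
    have hea : (p t).eval (a t) = (((1 + 2*t/3)^4 * (2 - 2*t) / 60 : ℝ) : ℂ) := by
      simp [p, a]; ring
    rw [he1, hea]
    have hA : (0:ℝ) < 1 + 2*t/3 := by linarith
    have hB : (0:ℝ) < 2 - 2*t := by linarith
    have hv1 : (0:ℝ) < 1/30 + t/18 := by linarith
    have hv2 : (0:ℝ) < (1 + 2*t/3)^4 * (2 - 2*t) / 60 :=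
      div_pos (mul_pos (pow_pos hA 4) hB) (by norm_num)
    have hkey : (1/30 + t/18) - ((1 + 2*t/3)^4 * (2 - 2*t) / 60)
        = t^3 * (8 * (10 + 20*t/3 + 4*t^2/3)) / (27 * 60) := by ring
    have h12R : (1/30 + t/18 : ℝ) ≠ (1 + 2*t/3)^4 * (2 - 2*t) / 60 := by
      have hpos : (0:ℝ) < t^3 * (8 * (10 + 20*t/3 + 4*t^2/3)) / (27 * 60) := by
        apply div_pos
        · apply mul_pos (pow_pos ht0 3)
          nlinarith [sq_nonneg t]
        · norm_num
      intro h
      rw [h] at hkey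
      simp at hkey
      linarith
    have h01 : (0:ℂ) ≠ ((1/30 + t/18 : ℝ) : ℂ) :=
      (Complex.ofReal_ne_zero.mpr (ne_of_gt hv1)).symm
    have h02 : (0:ℂ) ≠ (((1 + 2*t/3)^4 * (2 - 2*t) / 60 : ℝ) : ℂ) :=
      (Complex.ofReal_ne_zero.mpr (ne_of_gt hv2)).symm
    have h12 : ((1/30 + t/18 : ℝ) : ℂ) ≠ (((1 + 2*t/3)^4 * (2 - 2*t) / 60 : ℝ) : ℂ) := by
      exact_mod_cast fun h => h12R (Complex.ofReal_inj.mp h)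
    have hnm1 : ((1/30 + t/18 : ℝ) : ℂ) ∉ ({(((1 + 2*t/3)^4 * (2 - 2*t) / 60 : ℝ) : ℂ)} : Set ℂ) :=
      fun h => h12 h
    have hnm0 : (0:ℂ) ∉ ({((1/30 + t/18 : ℝ) : ℂ),
        (((1 + 2*t/3)^4 * (2 - 2*t) / 60 : ℝ) : ℂ)} : Set ℂ) := by
      rintro (h | h)
      · exact h01 h
      · exact h02 h
    rw [Set.ncard_insert_of_notMem hnm0, Set.ncard_insert_of_notMem hnm1,
      Set.ncard_singleton]
end

section
/- Let a = √5, b = 1 + √5, and p = X⁵/5 − (1+a+b)X⁴/4 + (a+b+ab)X³/3 − (ab/2)X² (an antiderivative of X(X−1)(X−a)(X−b) vanishing at 0). Then b = (3a² − 5a)/(5a − 10), p(√5) = 0 = p(0), p(1) = p(1+√5) ≠ 0, p has exactly two distinct critical values 0 and p(1), and the multiset of root multiplicities of p − γ equals {2,2,1} for each critical value γ of p. (Thus p is a Chebyshev polynomial defining the 5-edge chain T_5.) -/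
open Polynomial

private lemma roots5 (c α β γ : ℂ) (hc : c ≠ 0) :
    (C c * ((X - C α)^2 * ((X - C β)^2 * (X - C γ)))).roots = {α, α, β, β, γ} := by
  rw [roots_C_mul _ hc, roots_mul (by
      exact mul_ne_zero (pow_ne_zero _ (X_sub_C_ne_zero α))
        (mul_ne_zero (pow_ne_zero _ (X_sub_C_ne_zero β)) (X_sub_C_ne_zero γ)))]
  rw [roots_mul (mul_ne_zero (pow_ne_zero _ (X_sub_C_ne_zero β)) (X_sub_C_ne_zero γ))]
  rw [roots_pow, roots_pow, roots_X_sub_C, roots_X_sub_C, roots_X_sub_C, two_nsmul, two_nsmul]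
  rfl

private lemma fiber5 (q : ℂ[X]) (α β γ : ℂ) (h : q.roots = {α,α,β,β,γ})
    (hαβ : α ≠ β) (hαγ : α ≠ γ) (hβγ : β ≠ γ) :
    (q.roots.toFinset.val.map fun x => q.rootMultiplicity x) = {2, 2, 1} := by
  have key : ∀ x : ℂ, q.rootMultiplicity x = q.roots.count x := fun x => (count_roots q).symm
  have hval : q.roots.toFinset.val = {α, β, γ} := by
    rw [h, Multiset.toFinset_val]
    rw [show ({α,α,β,β,γ} : Multiset ℂ) = α ::ₘ α ::ₘ β ::ₘ β ::ₘ {γ} from rfl]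
    rw [Multiset.dedup_cons_of_mem (by simp), Multiset.dedup_cons_of_notMem (by simp [hαβ, hαγ]),
      Multiset.dedup_cons_of_mem (by simp), Multiset.dedup_cons_of_notMem (by simp [hβγ]),
      Multiset.dedup_singleton]
    rfl
  rw [hval]
  simp only [key, h]
  rw [show ({α,β,γ} : Multiset ℂ) = α ::ₘ β ::ₘ {γ} from rfl]
  rw [Multiset.map_cons, Multiset.map_cons, Multiset.map_singleton]
  simp [Multiset.count_cons, hαβ, hαγ, hβγ, hαβ.symm, hαγ.symm, hβγ.symm]

set_option maxHeartbeats 1000000 in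
/-- For `a = √5`, `b = 1 + √5`, the polynomial `p = ∫ x(x-1)(x-a)(x-b) dx` is a Chebyshev
polynomial defining the 5-edge chain `T₅`: its critical values are `0` and `p(1)`, and the
fiber multiplicity multiset over each critical value is `{2,2,1}`. -/
theorem chebyshev_chain_T5 :
    let a : ℂ := (Real.sqrt 5 : ℂ)
    let b : ℂ := 1 + (Real.sqrt 5 : ℂ)
    let p : ℂ[X] := C (1 / 5) * X ^ 5 - C ((1 + a + b) / 4) * X ^ 4 +
      C ((a + b + a * b) / 3) * X ^ 3 - C (a * b / 2) * X ^ 2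
    b = (3 * a ^ 2 - 5 * a) / (5 * a - 10) ∧
    p.eval a = 0 ∧ p.eval 0 = 0 ∧
    p.eval 1 = p.eval b ∧ p.eval 1 ≠ 0 ∧
    criticalValues p = {0, p.eval 1} ∧
    (∀ γ ∈ criticalValues p, fiberMults p γ = {2, 2, 1}) := by
  intro a b p
  have ha : a ^ 2 = 5 := by
    simp only [a, ← Complex.ofReal_pow]; norm_num [Real.sq_sqrt]
  have hb : b = 1 + a := rfl
  have ha0 : a ≠ 0 := by intro h; rw [h] at ha; norm_num at ha
  have ha2 : a ≠ 2 := by intro h; rw [h] at ha; norm_num at ha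
  have ha5 : a ≠ 5 := by intro h; rw [h] at ha; norm_num at ha
  have ham5 : a ≠ -5 := by intro h; rw [h] at ha; norm_num at ha
  have hc : (1 / 5 : ℂ) ≠ 0 := by norm_num
  -- the two factorizations
  have hp : p = C (1/5) * ((X - C 0)^2 * ((X - C a)^2 * (X - C ((5 + a)/2)))) := by
    apply Polynomial.funext
    intro x
    simp only [p, b, eval_mul, eval_add, eval_sub, eval_pow, eval_C, eval_X]
    linear_combination (-x^3/15 + a*x^2/10) * ha
  have he1 : p.eval 1 = -4/5 := by
    simp only [p, b, eval_mul, eval_add, eval_sub, eval_pow, eval_C, eval_X]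
    linear_combination (-(1:ℂ)/6) * ha
  have hp1 : p - C (-4/5) = C (1/5) * ((X - C 1)^2 * ((X - C b)^2 * (X - C ((a - 3)/2)))) := by
    apply Polynomial.funext
    intro x
    simp only [p, b, eval_mul, eval_add, eval_sub, eval_pow, eval_C, eval_X, eval_one]
    linear_combination (-x^3/15 + (a+2)*x^2/10 - (1+a)*x/5 + (a-1)/10) * ha
  have pea : p.eval a = 0 := by rw [hp]; simp
  have pe0 : p.eval 0 = 0 := by rw [hp]; simp
  have peb : p.eval b = -4/5 := by
    have := congrArg (eval b) hp1
    simp only [eval_mul, eval_sub, eval_pow, eval_C, eval_X] at this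
    linear_combination this
  have hd : p.derivative = X * ((X - C 1) * ((X - C a) * (X - C b))) := by
    apply Polynomial.funext
    intro x
    simp only [p, b, derivative_sub, derivative_add, derivative_C_mul, derivative_X_pow,
      eval_mul, eval_add, eval_sub, eval_pow, eval_C, eval_X, eval_natCast]
    push_cast
    ring
  have hcv : criticalValues p = {0, p.eval 1} := by
    ext y
    simp only [criticalValues, Set.mem_image, Set.mem_setOf_eq, Set.mem_insert_iff,
      Set.mem_singleton_iff]
    constructor
    · rintro ⟨x, hx, rfl⟩
      rw [hd] at hx
      simp only [eval_mul, eval_sub, eval_C, eval_X, eval_one, mul_eq_zero,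
        sub_eq_zero] at hx
      rcases hx with rfl | rfl | rfl | rfl
      · exact Or.inl pe0
      · exact Or.inr rfl
      · exact Or.inl pea
      · exact Or.inr (by rw [peb, he1])
    · rintro (rfl | rfl)
      · exact ⟨0, by rw [hd]; simp, pe0⟩
      · exact ⟨1, by rw [hd]; simp, rfl⟩
  refine ⟨?_, pea, pe0, by rw [he1, peb], by rw [he1]; norm_num, hcv, ?_⟩
  · have hden : (5 : ℂ) * a - 10 ≠ 0 := by
      intro h; exact ha2 (by linear_combination h / 5)
    rw [hb, eq_div_iff hden]
    linear_combination 2 * ha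
  · intro γ hγ
    rw [hcv] at hγ
    simp only [Set.mem_insert_iff, Set.mem_singleton_iff] at hγ
    rcases hγ with rfl | rfl
    · have h0 : p - C (0:ℂ) = C (1/5) * ((X - C 0)^2 * ((X - C a)^2 * (X - C ((5 + a)/2)))) := by
        rw [map_zero, sub_zero, hp, map_zero]
      simp only [fiberMults, h0]
      exact fiber5 _ 0 a ((5 + a)/2) (roots5 _ _ _ _ hc)
        (fun h => ha0 h.symm)
        (fun h => ham5 (by linear_combination -2 * h))
        (fun h => ha5 (by linear_combination 2 * h))
    · simp only [fiberMults, he1, hp1]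
      exact fiber5 _ 1 b ((a - 3)/2) (roots5 _ _ _ _ hc)
        (fun h => ha0 (by rw [hb] at h; linear_combination -h))
        (fun h => ha5 (by linear_combination -2 * h))
        (fun h => ham5 (by rw [hb] at h; linear_combination 2 * h))
end

section
/- Let a = (5 + i√5)/3 and p = X⁵/5 − (2+a)X⁴/4 + (1+2a)X³/3 − (a/2)X² (an antiderivative of X(X−1)²(X−a) vanishing at 0). Then (3a² − 5a)/(5a − 10) = 1, p(a) = 0 = p(0), p(1) ≠ 0, p has exactly two distinct critical values 0 and p(1), the multiset of root multiplicities of p − 0 is {2,2,1}, and the multiset of root multiplicities of p − p(1) is {3,1,1}. (Thus p is a Chebyshev polynomial defining the 5-edge tree T_4.) -/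
open Polynomial

noncomputable section CT4aux

def ct : ℂ := Complex.I * (Real.sqrt 5 : ℂ)
def ca : ℂ := (5 + ct) / 3
def cw : ℂ := (Real.sqrt 3 : ℂ)
def cpp : ℂ[X] := C (1 / 5) * X ^ 5 - C ((2 + ca) / 4) * X ^ 4 +
      C ((1 + 2 * ca) / 3) * X ^ 3 - C (ca / 2) * X ^ 2
def cr : ℂ := (10 - 3 * ca) / 4
def cu : ℂ := ((5 + 3 * cw) * ca - 2) / 8
def cv : ℂ := ((5 - 3 * cw) * ca - 2) / 8
def cp1 : ℂ := (2 - 5 * ca) / 60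

lemma hct2 : ct ^ 2 = -5 := by
  have h : ((Real.sqrt 5 : ℝ) : ℂ) ^ 2 = 5 := by
    norm_cast
    exact Real.sq_sqrt (by norm_num)
  rw [ct, mul_pow, Complex.I_sq, h]; ring

lemma hA : 3 * ca ^ 2 - 10 * ca + 10 = 0 := by
  rw [ca]; linear_combination hct2 / 3

lemma hw2 : cw ^ 2 = 3 := by
  rw [cw]; norm_cast; exact Real.sq_sqrt (by norm_num)

lemma hp1 : cpp.eval 1 = cp1 := by
  simp [cpp, cp1, ca]; ring

lemma hfac0 : cpp = C (1/5) * (X ^ 2 * ((X - C ca) ^ 2 * (X - C cr))) := by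
  apply Polynomial.funext; intro x
  simp [cpp, cr]
  linear_combination (x ^ 3 / 30 - ca * x ^ 2 / 20) * hA

lemma hfac1 : cpp - C cp1 = C (1/5) * ((X - 1) ^ 3 * ((X - C cu) * (X - C cv))) := by
  apply Polynomial.funext; intro x
  simp [cpp, cp1, cu, cv]
  linear_combination ((x^3 - 3*x^2 + 3*x - 1) / 480) * hA +
    (9 * ca^2 * (x^3 - 3*x^2 + 3*x - 1) / 320) * hw2

end CT4aux

section CT4c

lemma ne_of_im {x y x' y' : ℝ} (h : y ≠ y') :
    (↑x + ↑y * Complex.I : ℂ) ≠ ↑x' + ↑y' * Complex.I := by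
  intro hc
  apply h
  simpa using congrArg Complex.im hc

lemma ca_form : ca = ((5/3 : ℝ) : ℂ) + ((Real.sqrt 5 / 3 : ℝ) : ℂ) * Complex.I := by
  rw [ca, ct]; push_cast; ring

lemma cr_form : cr = ((5/4 : ℝ) : ℂ) + ((-(Real.sqrt 5) / 4 : ℝ) : ℂ) * Complex.I := by
  rw [cr, ca, ct]; push_cast; ring

lemma cu_form : cu = (((5 * (5 + 3 * Real.sqrt 3) / 3 - 2) / 8 : ℝ) : ℂ) +
    (((5 + 3 * Real.sqrt 3) * Real.sqrt 5 / 24 : ℝ) : ℂ) * Complex.I := by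
  rw [cu, cw, ca, ct]; push_cast; ring

lemma cv_form : cv = (((5 * (5 - 3 * Real.sqrt 3) / 3 - 2) / 8 : ℝ) : ℂ) +
    (((5 - 3 * Real.sqrt 3) * Real.sqrt 5 / 24 : ℝ) : ℂ) * Complex.I := by
  rw [cv, cw, ca, ct]; push_cast; ring

lemma zero_form : (0 : ℂ) = ((0:ℝ):ℂ) + ((0:ℝ):ℂ) * Complex.I := by push_cast; ring
lemma one_form : (1 : ℂ) = ((1:ℝ):ℂ) + ((0:ℝ):ℂ) * Complex.I := by push_cast; ring

lemma s5pos : (0:ℝ) < Real.sqrt 5 := Real.sqrt_pos.mpr (by norm_num)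
lemma s3nonneg : (0:ℝ) ≤ Real.sqrt 3 := Real.sqrt_nonneg 3
lemma s3ne : 3 * Real.sqrt 3 ≠ 5 := by
  have h := Real.sq_sqrt (show (0:ℝ) ≤ 3 by norm_num)
  intro hc
  nlinarith [hc]

lemma h0a : (0:ℂ) ≠ ca := by
  rw [zero_form, ca_form]
  exact ne_of_im (by positivity : (0:ℝ) < Real.sqrt 5 / 3).ne
end CT4c

section CT4d

lemma h0r : (0:ℂ) ≠ cr := by
  rw [zero_form, cr_form]
  refine ne_of_im ?_
  have := s5pos
  intro hc; nlinarith [hc]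

lemma har : ca ≠ cr := by
  rw [ca_form, cr_form]
  refine ne_of_im ?_
  have := s5pos
  intro hc; nlinarith [hc]

lemma h1u : (1:ℂ) ≠ cu := by
  rw [one_form, cu_form]
  refine ne_of_im ?_
  have := s5pos; have := s3nonneg
  intro hc; nlinarith [hc]

lemma h1v : (1:ℂ) ≠ cv := by
  rw [one_form, cv_form]
  refine ne_of_im ?_
  have := s5pos; have h3 := s3ne
  intro hc
  have : (5 - 3*Real.sqrt 3) * Real.sqrt 5 = 0 := by linarith [hc]
  rcases mul_eq_zero.mp this with h | h
  · exact h3 (by linarith)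
  · linarith

lemma huv : cu ≠ cv := by
  rw [cu_form, cv_form]
  refine ne_of_im ?_
  have := s5pos; have := s3nonneg
  have h3 : (0:ℝ) < Real.sqrt 3 := Real.sqrt_pos.mpr (by norm_num)
  intro hc; nlinarith [hc]

lemma hca2 : ca ≠ 2 := by
  have : (2:ℂ) = ((2:ℝ):ℂ) + ((0:ℝ):ℂ) * Complex.I := by push_cast; ring
  rw [ca_form, this]
  refine ne_of_im ?_
  have := s5pos
  intro hc; nlinarith [hc]

lemma hcp1ne : cp1 ≠ 0 := by
  have hf : cp1 = (((2 - 5*(5/3))/60 : ℝ) : ℂ) + ((-(Real.sqrt 5)/36 : ℝ) : ℂ) * Complex.I := by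
    rw [cp1, ca, ct]; push_cast; ring
  rw [hf, zero_form]
  refine ne_of_im ?_
  have := s5pos
  intro hc; nlinarith [hc]

lemma hpa : cpp.eval ca = 0 := by
  simp [cpp]
  linear_combination (-ca^3/60) * hA

lemma hpe0 : cpp.eval 0 = 0 := by simp [cpp]

lemma hderiv : ∀ x : ℂ, cpp.derivative.eval x = x * (x-1)^2 * (x - ca) := by
  intro x
  have hd : cpp.derivative = X^4 - C (2 + ca) * X^3 + C (1 + 2*ca) * X^2 - C ca * X := by
    rw [cpp]
    simp [derivative_sub, derivative_add, derivative_C_mul, derivative_X_pow]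
    apply Polynomial.funext; intro y
    simp
    ring
  rw [hd]
  simp
  ring

end CT4d

section CT4e

lemma hroots0 : cpp.roots = {0, 0, ca, ca, cr} := by
  rw [hfac0]
  rw [roots_C_mul _ (by norm_num : (1/5 : ℂ) ≠ 0)]
  rw [roots_mul (mul_ne_zero (pow_ne_zero _ X_ne_zero)
      (mul_ne_zero (pow_ne_zero _ (X_sub_C_ne_zero _)) (X_sub_C_ne_zero _)))]
  rw [roots_mul (mul_ne_zero (pow_ne_zero _ (X_sub_C_ne_zero _)) (X_sub_C_ne_zero _))]
  rw [roots_pow, roots_pow, roots_X, roots_X_sub_C, roots_X_sub_C]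
  rfl

lemma hroots1 : (cpp - C cp1).roots = {1, 1, 1, cu, cv} := by
  rw [hfac1]
  rw [roots_C_mul _ (by norm_num : (1/5 : ℂ) ≠ 0)]
  have h1 : ((X : ℂ[X]) - 1) = X - C 1 := by simp
  rw [roots_mul (mul_ne_zero (pow_ne_zero _ (by rw [h1]; exact X_sub_C_ne_zero _))
      (mul_ne_zero (X_sub_C_ne_zero _) (X_sub_C_ne_zero _)))]
  rw [roots_mul (mul_ne_zero (X_sub_C_ne_zero _) (X_sub_C_ne_zero _))]
  rw [roots_pow, h1, roots_X_sub_C, roots_X_sub_C, roots_X_sub_C]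
  rfl

end CT4e


section CT4f

lemma hcv : criticalValues cpp = {0, cpp.eval 1} := by
  unfold criticalValues
  ext y
  simp only [Set.mem_image, Set.mem_setOf_eq, Set.mem_insert_iff, Set.mem_singleton_iff]
  constructor
  · rintro ⟨x, hx, rfl⟩
    rw [hderiv] at hx
    rcases mul_eq_zero.mp hx with h | h
    · rcases mul_eq_zero.mp h with h' | h'
      · left; rw [h', hpe0]
      · right; rw [sub_eq_zero.mp (pow_eq_zero_iff (by norm_num) |>.mp h')]
    · left; rw [sub_eq_zero.mp h, hpa]
  · rintro (rfl | rfl)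
    · exact ⟨0, by rw [hderiv]; ring, hpe0⟩
    · exact ⟨1, by rw [hderiv]; ring, rfl⟩

lemma hded0 : ({0, 0, ca, ca, cr} : Multiset ℂ).dedup = {0, ca, cr} := by
  rw [show ({0, 0, ca, ca, cr} : Multiset ℂ) = 0 ::ₘ 0 ::ₘ ca ::ₘ ca ::ₘ {cr} from rfl]
  rw [Multiset.dedup_cons_of_mem (by simp)]
  rw [Multiset.dedup_cons_of_notMem (by simp [h0a, h0r])]
  rw [Multiset.dedup_cons_of_mem (by simp)]
  rw [Multiset.dedup_cons_of_notMem (by simp [har])]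
  rfl

lemma hded1 : ({1, 1, 1, cu, cv} : Multiset ℂ).dedup = {1, cu, cv} := by
  rw [show ({1, 1, 1, cu, cv} : Multiset ℂ) = 1 ::ₘ 1 ::ₘ 1 ::ₘ cu ::ₘ {cv} from rfl]
  rw [Multiset.dedup_cons_of_mem (by simp)]
  rw [Multiset.dedup_cons_of_mem (by simp)]
  rw [Multiset.dedup_cons_of_notMem (by simp [h1u, h1v])]
  rw [Multiset.dedup_cons_of_notMem (by simp [huv])]
  rfl

lemma hm0a : rootMultiplicity (0:ℂ) cpp = 2 := by
  rw [← count_roots, hroots0]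
  simp [Multiset.count_cons, Multiset.count_singleton, h0a, h0r]

lemma hm0b : rootMultiplicity ca cpp = 2 := by
  rw [← count_roots, hroots0]
  simp [Multiset.count_cons, Multiset.count_singleton, h0a.symm, har]

lemma hm0c : rootMultiplicity cr cpp = 1 := by
  rw [← count_roots, hroots0]
  simp [Multiset.count_cons, Multiset.count_singleton, h0r.symm, har.symm]

lemma hm1a : rootMultiplicity (1:ℂ) (cpp - C cp1) = 3 := by
  rw [← count_roots, hroots1]
  simp [Multiset.count_cons, Multiset.count_singleton, h1u, h1v]

lemma hm1b : rootMultiplicity cu (cpp - C cp1) = 1 := by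
  rw [← count_roots, hroots1]
  simp [Multiset.count_cons, Multiset.count_singleton, h1u.symm, huv]

lemma hm1c : rootMultiplicity cv (cpp - C cp1) = 1 := by
  rw [← count_roots, hroots1]
  simp [Multiset.count_cons, Multiset.count_singleton, h1v.symm, huv.symm]

lemma hfib0 : (cpp - C 0).roots.toFinset.val.map
    (fun x => (cpp - C 0).rootMultiplicity x) = ({2, 2, 1} : Multiset ℕ) := by
  simp only [map_zero, sub_zero]
  rw [hroots0, Multiset.toFinset_val, hded0]
  rw [show ({0, ca, cr} : Multiset ℂ) = 0 ::ₘ ca ::ₘ {cr} from rfl]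
  rw [Multiset.map_cons, Multiset.map_cons, Multiset.map_singleton]
  rw [hm0a, hm0b, hm0c]; rfl

lemma hfib1 : (cpp - C cp1).roots.toFinset.val.map
    (fun x => (cpp - C cp1).rootMultiplicity x) = ({3, 1, 1} : Multiset ℕ) := by
  rw [hroots1, Multiset.toFinset_val, hded1]
  rw [show ({1, cu, cv} : Multiset ℂ) = 1 ::ₘ cu ::ₘ {cv} from rfl]
  rw [Multiset.map_cons, Multiset.map_cons, Multiset.map_singleton]
  rw [hm1a, hm1b, hm1c]; rfl

lemma hpart1 : (3 * ca ^ 2 - 5 * ca) / (5 * ca - 10) = 1 := by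
  rw [div_eq_one_iff_eq (by
    intro h
    exact hca2 (by linear_combination h / 5))]
  linear_combination hA

end CT4f

lemma hpe1ne : cpp.eval 1 ≠ 0 := by rw [hp1]; exact hcp1ne

lemma hfibA : fiberMults cpp 0 = ({2, 2, 1} : Multiset ℕ) := hfib0

lemma hfibB : fiberMults cpp (cpp.eval 1) = ({3, 1, 1} : Multiset ℕ) := by
  unfold fiberMults
  rw [hp1]
  exact hfib1

/-- For `a = (5 + i√5)/3`, the polynomial `p = ∫ x(x-1)²(x-a) dx` is a Chebyshev
polynomial defining the 5-edge tree `T₄`: its critical values are `0` and `p(1)`,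
the fiber over `0` has multiplicities `{2,2,1}` and the fiber over `p(1)` has
multiplicities `{3,1,1}`. -/
theorem chebyshev_T4 :
    let a : ℂ := (5 + Complex.I * (Real.sqrt 5 : ℂ)) / 3
    let p : ℂ[X] := C (1 / 5) * X ^ 5 - C ((2 + a) / 4) * X ^ 4 +
      C ((1 + 2 * a) / 3) * X ^ 3 - C (a / 2) * X ^ 2
    (3 * a ^ 2 - 5 * a) / (5 * a - 10) = 1 ∧
    p.eval a = 0 ∧ p.eval 0 = 0 ∧ p.eval 1 ≠ 0 ∧
    criticalValues p = {0, p.eval 1} ∧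
    fiberMults p 0 = {2, 2, 1} ∧
    fiberMults p (p.eval 1) = {3, 1, 1} := by
  intro a p
  have ha : a = ca := rfl
  have hp : p = cpp := rfl
  rw [ha, hp]
  exact ⟨hpart1, hpa, hpe0, hpe1ne, hcv, hfibA, hfibB⟩
end

section
/- Let p ∈ ℂ[X] be the antiderivative vanishing at 0 of (X² − 1)(X − i/√3)²(X − i√3). Then p(−1) = p(1) = p(i√3), this common value is different from p(i/√3), so p has exactly two distinct critical values; moreover the multiset of root multiplicities of p − p(1) is {2,2,2} and the multiset of root multiplicities of p − p(i/√3) is {3,1,1,1}. (Thus p is a degree-6 Chebyshev polynomial defining the 6-edge tree T_12, obtained by degenerating the Zolotarev family ∫(x²−1)(x−a)(x−b)(x−c)dx with p(−1)=p(1)=p(c) at a = b = i/√3, c = i√3.) -/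
open Polynomial

noncomputable def Qp (a : ℂ) : ℂ[X] :=
  C (6⁻¹ : ℂ) * ((X ^ 2 - 1) * (X - C (3 * a))) ^ 2 + C (1/2 : ℂ)

lemma Qp_eval (a x : ℂ) : (Qp a).eval x = 6⁻¹ * ((x ^ 2 - 1) * (x - 3 * a)) ^ 2 + 1/2 := by
  simp [Qp]

lemma Qp_deriv (a : ℂ) (ha : a ^ 2 = -(1/3)) :
    derivative (Qp a) = (X ^ 2 - 1) * (X - C a) ^ 2 * (X - C (3 * a)) := by
  apply Polynomial.funext
  intro x
  simp only [Qp, derivative_add, derivative_mul, derivative_C, derivative_pow, derivative_sub,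
    derivative_X, derivative_one, eval_add, eval_mul, eval_pow, eval_sub, eval_C, eval_X,
    eval_one, eval_zero]
  ring_nf
  linear_combination (-((x ^ 2 - 1) * (x - 3 * a))) * ha

lemma Qp_eval_one (a : ℂ) : (Qp a).eval 1 = 1/2 := by simp [Qp_eval]

lemma Qp_eval_neg_one (a : ℂ) : (Qp a).eval (-1) = 1/2 := by
  rw [Qp_eval]; ring

lemma Qp_eval_3a (a : ℂ) : (Qp a).eval (3 * a) = 1/2 := by
  rw [Qp_eval]; ring

lemma Qp_eval_a (a : ℂ) (ha : a ^ 2 = -(1/3)) : (Qp a).eval a = 17/162 := by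
  rw [Qp_eval]
  linear_combination ((2/3) * a ^ 4 - (14/9) * a ^ 2 + 32/27) * ha

lemma Qp_eval_zero (a : ℂ) (ha : a ^ 2 = -(1/3)) : (Qp a).eval 0 = 0 := by
  rw [Qp_eval]
  linear_combination (3/2 : ℂ) * ha

lemma fac1 (a : ℂ) :
    Qp a - C (1/2 : ℂ) = C (6⁻¹ : ℂ) * ((X - C 1) * (X - C (-1)) * (X - C (3 * a))) ^ 2 := by
  simp only [Qp, map_one, map_neg]
  ring

lemma fac2 (a : ℂ) (ha : a ^ 2 = -(1/3)) :
    Qp a - C (17/162 : ℂ) = C (6⁻¹ : ℂ) *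
      ((X - C a) ^ 3 * (X ^ 3 - C (3 * a) * X ^ 2 - X + C (17/3 * a))) := by
  apply Polynomial.funext
  intro x
  simp only [eval_sub, eval_add, eval_mul, eval_pow, eval_C, eval_X, Qp_eval]
  linear_combination (-(x ^ 4)/2 + x ^ 2/2 + 32/27 + a * (5 * x ^ 3/3 - 3 * x)
    + a ^ 2 * (17/18 - x ^ 2/2)) * ha

section NeFacts
variable {a : ℂ} (ha : a ^ 2 = -(1/3))

include ha

lemma a_ne_zero : a ≠ 0 := by
  intro h; rw [h] at ha; norm_num at ha

lemma a_ne_one : a ≠ 1 := by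
  intro h; rw [h] at ha; norm_num at ha

lemma a_ne_neg_one : a ≠ -1 := by
  intro h; rw [h] at ha; norm_num at ha

lemma three_a_ne_one : 3 * a ≠ 1 := by
  intro h
  have : (3 * a) ^ 2 = 1 := by rw [h]; norm_num
  rw [mul_pow, ha] at this; norm_num at this

lemma three_a_ne_neg_one : 3 * a ≠ -1 := by
  intro h
  have : (3 * a) ^ 2 = 1 := by rw [h]; norm_num
  rw [mul_pow, ha] at this; norm_num at this

lemma a_ne_3a : a ≠ 3 * a := by
  intro h
  have h2 : 2 * a = 0 := by linear_combination -h
  have := a_ne_zero ha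
  simp [this] at h2

end NeFacts

lemma roots1 (a : ℂ) :
    (Qp a - C (1/2 : ℂ)).roots = 2 • ({1, -1, 3 * a} : Multiset ℂ) := by
  rw [fac1, roots_C_mul _ (by norm_num), roots_pow, roots_mul (by
    exact mul_ne_zero (mul_ne_zero (X_sub_C_ne_zero 1) (X_sub_C_ne_zero (-1)))
      (X_sub_C_ne_zero (3 * a))), roots_mul (by
    exact mul_ne_zero (X_sub_C_ne_zero 1) (X_sub_C_ne_zero (-1))),
    roots_X_sub_C, roots_X_sub_C, roots_X_sub_C]
  rfl

open Multiset in
lemma fiber1 (a : ℂ) (ha : a ^ 2 = -(1/3)) :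
    fiberMults (Qp a) (1/2) = {2, 2, 2} := by
  classical
  have h1 : (1 : ℂ) ≠ -1 := by norm_num
  have h2 : (1 : ℂ) ≠ 3 * a := fun h => three_a_ne_one ha h.symm
  have h3 : (-1 : ℂ) ≠ 3 * a := fun h => three_a_ne_neg_one ha h.symm
  have hR := roots1 a
  unfold fiberMults
  rw [hR]
  have htf : (2 • ({1, -1, 3 * a} : Multiset ℂ)).toFinset
      = ({1, -1, 3 * a} : Multiset ℂ).toFinset := Multiset.toFinset_nsmul _ 2 (by norm_num)
  rw [htf]
  have htf2 : ({1, -1, 3 * a} : Multiset ℂ).toFinset = ({1, -1, 3 * a} : Finset ℂ) := by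
    simp [Multiset.toFinset_cons, Multiset.toFinset_singleton]
  rw [htf2]
  have hv : ({1, -1, 3 * a} : Finset ℂ).val = ({1, -1, 3 * a} : Multiset ℂ) := by
    rw [show ({1, -1, 3 * a} : Finset ℂ) = insert 1 (insert (-1) {3 * a}) from rfl]
    rw [Finset.insert_val_of_notMem (by simp [h1, h2]),
      Finset.insert_val_of_notMem (by simp [h3])]
    rfl
  rw [hv]
  have hc : ∀ x : ℂ, (Qp a - C (1/2 : ℂ)).rootMultiplicity x
      = Multiset.count x (2 • ({1, -1, 3 * a} : Multiset ℂ)) := by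
    intro x; rw [← count_roots, hR]
  simp only [Multiset.insert_eq_cons, Multiset.map_cons, Multiset.map_singleton, hc,
    Multiset.count_nsmul, Multiset.count_cons, Multiset.count_singleton]
  norm_num [h1, h2, h3, h1.symm, h2.symm, h3.symm]

noncomputable def gp (a : ℂ) : ℂ[X] := X ^ 3 - C (3 * a) * X ^ 2 - X + C (17/3 * a)

lemma fac2' (a : ℂ) (ha : a ^ 2 = -(1/3)) :
    Qp a - C (17/162 : ℂ) = C (6⁻¹ : ℂ) * ((X - C a) ^ 3 * gp a) := fac2 a ha

lemma gp_natDegree (a : ℂ) : (gp a).natDegree = 3 := by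
  unfold gp; compute_degree!

lemma gp_ne_zero (a : ℂ) : gp a ≠ 0 := fun h => by simpa [h] using gp_natDegree a

lemma gp_card_roots (a : ℂ) : Multiset.card (gp a).roots = 3 := by
  rw [splits_iff_card_roots.mp (IsAlgClosed.splits (gp a)), gp_natDegree]

lemma a_not_root_gp (a : ℂ) (ha : a ^ 2 = -(1/3)) : ¬ (gp a).IsRoot a := by
  have : (gp a).eval a = (16/3) * a := by
    simp only [gp, eval_add, eval_sub, eval_mul, eval_pow, eval_C, eval_X]
    linear_combination (a - 3 * a) * ha
  rw [IsRoot, this]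
  exact mul_ne_zero (by norm_num) (a_ne_zero ha)

lemma a_notin_gp_roots (a : ℂ) (ha : a ^ 2 = -(1/3)) : a ∉ (gp a).roots := by
  rw [mem_roots (gp_ne_zero a)]
  exact a_not_root_gp a ha

lemma roots2 (a : ℂ) (ha : a ^ 2 = -(1/3)) :
    (Qp a - C (17/162 : ℂ)).roots = 3 • ({a} : Multiset ℂ) + (gp a).roots := by
  rw [fac2' a ha, roots_C_mul _ (by norm_num),
    roots_mul (mul_ne_zero (pow_ne_zero _ (X_sub_C_ne_zero a)) (gp_ne_zero a)),
    roots_pow, roots_X_sub_C]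

lemma Qp_sub_ne (a : ℂ) : Qp a - C (17/162 : ℂ) ≠ 0 := by
  intro h
  have := congrArg (eval 1) h
  rw [eval_sub, eval_C, Qp_eval_one, eval_zero] at this
  norm_num at this

lemma key_mult_one (a : ℂ) (ha : a ^ 2 = -(1/3)) :
    ∀ x ∈ (gp a).roots, (Qp a - C (17/162 : ℂ)).rootMultiplicity x = 1 := by
  intro x hx
  have hgx : (gp a).eval x = 0 := ((mem_roots (gp_ne_zero a)).mp hx)
  have hxroot : (Qp a - C (17/162 : ℂ)).IsRoot x := by
    rw [IsRoot, fac2' a ha]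
    simp [hgx]
  have hQx : (Qp a).eval x = 17/162 := by
    have := hxroot
    rw [IsRoot, eval_sub, eval_C, sub_eq_zero] at this
    exact this
  have hxa : x ≠ a := fun h => a_not_root_gp a ha (h ▸ hgx)
  have hx1 : x ≠ 1 := by
    intro h; rw [h, Qp_eval_one] at hQx; norm_num at hQx
  have hxn1 : x ≠ -1 := by
    intro h; rw [h, Qp_eval_neg_one] at hQx; norm_num at hQx
  have hx3a : x ≠ 3 * a := by
    intro h; rw [h, Qp_eval_3a] at hQx; norm_num at hQx
  have hQd : derivative (Qp a - C (17/162 : ℂ))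
      = (X ^ 2 - 1) * (X - C a) ^ 2 * (X - C (3 * a)) := by
    rw [derivative_sub, derivative_C, sub_zero, Qp_deriv a ha]
  have hd0 : (derivative (Qp a - C (17/162 : ℂ))).rootMultiplicity x = 0 := by
    apply rootMultiplicity_eq_zero
    rw [IsRoot, hQd]
    simp only [eval_mul, eval_pow, eval_sub, eval_C, eval_X, eval_one]
    have f1 : x ^ 2 - 1 ≠ 0 := by
      intro h
      have : (x - 1) * (x + 1) = 0 := by linear_combination h
      rcases mul_eq_zero.mp this with h' | h'
      · exact hx1 (by linear_combination h')
      · exact hxn1 (by linear_combination h')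
    exact mul_ne_zero (mul_ne_zero f1 (pow_ne_zero _ (sub_ne_zero.mpr hxa)))
      (sub_ne_zero.mpr hx3a)
  have hpos : 0 < (Qp a - C (17/162 : ℂ)).rootMultiplicity x :=
    (rootMultiplicity_pos (Qp_sub_ne a)).mpr hxroot
  have hder := derivative_rootMultiplicity_of_root hxroot
  rw [hd0] at hder
  omega

lemma gp_roots_nodup (a : ℂ) (ha : a ^ 2 = -(1/3)) : (gp a).roots.Nodup := by
  classical
  rw [Multiset.nodup_iff_count_le_one]
  intro x
  by_cases hx : x ∈ (gp a).roots
  · have h1 : Multiset.count x (Qp a - C (17/162 : ℂ)).roots = 1 := by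
      rw [count_roots]; exact key_mult_one a ha x hx
    have hxa : x ≠ a := fun h => a_notin_gp_roots a ha (h ▸ hx)
    rw [roots2 a ha, Multiset.count_add, Multiset.count_nsmul,
      Multiset.count_singleton, if_neg hxa] at h1
    omega
  · rw [Multiset.count_eq_zero_of_notMem hx]
    omega

open Multiset in
lemma fiber2 (a : ℂ) (ha : a ^ 2 = -(1/3)) :
    fiberMults (Qp a) (17/162) = {3, 1, 1, 1} := by
  classical
  unfold fiberMults
  rw [roots2 a ha, Multiset.toFinset_add, Multiset.toFinset_nsmul _ 3 (by norm_num),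
    Multiset.toFinset_singleton, ← Finset.insert_eq,
    Finset.insert_val_of_notMem (by simpa [Multiset.mem_toFinset] using a_notin_gp_roots a ha),
    Multiset.toFinset_val, Multiset.dedup_eq_self.mpr (gp_roots_nodup a ha),
    Multiset.map_cons]
  have hma : (Qp a - C (17/162 : ℂ)).rootMultiplicity a = 3 := by
    rw [← count_roots, roots2 a ha, Multiset.count_add, Multiset.count_nsmul,
      Multiset.count_singleton, if_pos rfl,
      Multiset.count_eq_zero_of_notMem (a_notin_gp_roots a ha)]
  rw [hma]
  have hmap : Multiset.map (fun x => (Qp a - C (17/162 : ℂ)).rootMultiplicity x) (gp a).roots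
      = Multiset.replicate 3 1 := by
    rw [Multiset.map_congr rfl (key_mult_one a ha), Multiset.map_const', gp_card_roots]
  rw [hmap]
  rfl

/-- Let `p` be the antiderivative vanishing at `0` of `(X²-1)(X - i/√3)²(X - i√3)`.
Then `p(-1) = p(1) = p(i√3) ≠ p(i/√3)`, so `p` is a degree-6 Chebyshev polynomial; its
fiber multiplicity multisets are `{2,2,2}` over `p(1)` and `{3,1,1,1}` over `p(i/√3)`
(the tree `T₁₂`). -/
theorem chebyshev_T12 (p : ℂ[X])
    (hderiv : p.derivative = (X ^ 2 - 1) *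
      (X - C (Complex.I / (Real.sqrt 3 : ℂ))) ^ 2 *
      (X - C (Complex.I * (Real.sqrt 3 : ℂ))))
    (h0 : p.eval 0 = 0) :
    p.eval (-1) = p.eval 1 ∧
    p.eval 1 = p.eval (Complex.I * (Real.sqrt 3 : ℂ)) ∧
    p.eval 1 ≠ p.eval (Complex.I / (Real.sqrt 3 : ℂ)) ∧
    criticalValues p = {p.eval 1, p.eval (Complex.I / (Real.sqrt 3 : ℂ))} ∧
    fiberMults p (p.eval 1) = {2, 2, 2} ∧
    fiberMults p (p.eval (Complex.I / (Real.sqrt 3 : ℂ))) = {3, 1, 1, 1} := by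

  have hs0 : (Real.sqrt 3 : ℂ) ≠ 0 := Complex.ofReal_ne_zero.mpr (by positivity)
  have hs2 : ((Real.sqrt 3 : ℝ) : ℂ) ^ 2 = 3 := by
    norm_cast
    rw [Real.sq_sqrt (by norm_num)]
  set a : ℂ := Complex.I / (Real.sqrt 3 : ℂ) with ha_def
  have ha : a ^ 2 = -(1/3) := by
    rw [ha_def, div_pow, Complex.I_sq, hs2]
    norm_num
  have h3a : Complex.I * (Real.sqrt 3 : ℂ) = 3 * a := by
    rw [ha_def]
    field_simp
    linear_combination hs2
  have hderiv' : p.derivative = (X ^ 2 - 1) * (X - C a) ^ 2 * (X - C (3 * a)) := by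
    rw [hderiv, h3a]
  have hp : p = Qp a := by
    have hd0 : derivative (p - Qp a) = 0 := by
      rw [derivative_sub, hderiv', Qp_deriv a ha, sub_self]
    have hdeg : (p - Qp a).natDegree = 0 := natDegree_eq_zero_of_derivative_eq_zero hd0
    have hC := eq_C_of_natDegree_eq_zero hdeg
    rw [coeff_zero_eq_eval_zero, eval_sub, h0, Qp_eval_zero a ha, sub_zero, map_zero] at hC
    exact sub_eq_zero.mp hC
  subst hp
  rw [h3a]
  refine ⟨?_, ?_, ?_, ?_, ?_, ?_⟩
  · rw [Qp_eval_neg_one, Qp_eval_one]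
  · rw [Qp_eval_one, Qp_eval_3a]
  · rw [Qp_eval_one, Qp_eval_a a ha]; norm_num
  · ext y
    simp only [criticalValues, Set.mem_image, Set.mem_setOf_eq, Set.mem_insert_iff,
      Set.mem_singleton_iff]
    constructor
    · rintro ⟨x, hx, rfl⟩
      rw [Qp_deriv a ha] at hx
      simp only [eval_mul, eval_pow, eval_sub, eval_C, eval_X, eval_one] at hx
      rcases mul_eq_zero.mp hx with h | h
      · rcases mul_eq_zero.mp h with h' | h'
        · have h'' : (x - 1) * (x + 1) = 0 := by linear_combination h'
          rcases mul_eq_zero.mp h'' with h3 | h3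
          · left; rw [sub_eq_zero.mp h3]
          · left
            have hx1 : x = -1 := by linear_combination h3
            rw [hx1, Qp_eval_neg_one, Qp_eval_one]
        · right
          have := pow_eq_zero_iff (two_ne_zero) |>.mp h'
          rw [sub_eq_zero.mp this]
      · left
        have hx3 : x = 3 * a := sub_eq_zero.mp h
        rw [hx3, Qp_eval_3a, Qp_eval_one]
    · rintro (h | h)
      · exact ⟨1, by rw [Qp_deriv a ha]; simp, h.symm⟩
      · exact ⟨a, by rw [Qp_deriv a ha]; simp, h.symm⟩
  · rw [Qp_eval_one]
    exact fiber1 a ha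
  · rw [Qp_eval_a a ha]
    exact fiber2 a ha
end
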